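/- Let T be a tree with edge lengths ℓ, partitioned into two subtrees T₁ and T₂ sharing exactly one vertex v. For C ⊆ E(T), α ≥ 1, and β ≥ 0, define load_{C,α}(u,w) = dist_ℓ(u,w)/α − dist_{ℓ_C}(u,w) and load_{C,α}(T_i, v) = max over u ∈ V(T_i) of load_{C,α}(u,v). Then C satisfies load_{C,α}(u,w) ≤ β for all u,w ∈ V(T) if and only if: C ∩ E(T₁) satisfies this condition within T₁, C ∩ E(T₂) satisfies it within T₂, and load_{C,α}(T₁,v) + load_{C,α}(T₂,v) ≤ β. -/

import Mathlib

open Classical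

noncomputable def walkLen {V : Type*} (G : SimpleGraph V) (ℓ : Sym2 V → ℝ)
    {u v : V} (w : G.Walk u v) : ℝ := (w.edges.map ℓ).sum

noncomputable def gdist {V : Type*} (G : SimpleGraph V) (ℓ : Sym2 V → ℝ) (u v : V) : ℝ :=
  sInf {x : ℝ | ∃ w : G.Walk u v, walkLen G ℓ w = x}

noncomputable def zeroOn {V : Type*} (ℓ : Sym2 V → ℝ) (C : Set (Sym2 V)) : Sym2 V → ℝ :=
  fun e => if e ∈ C then 0 else ℓ e

private lemma sum_map_le_of_subset {α : Type*} {l₁ l₂ : List α} (f : α → ℝ)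
    (hd : l₁.Nodup) (hsub : l₁ ⊆ l₂) (hnn : ∀ x ∈ l₂, 0 ≤ f x) :
    (l₁.map f).sum ≤ (l₂.map f).sum := by
  have h : (l₁ : Multiset α) ≤ (l₂ : Multiset α) := by
    rw [Multiset.le_iff_subset (by exact hd)]
    exact hsub
  have h2 : ((l₁ : Multiset α).map f) ≤ ((l₂ : Multiset α).map f) :=
    Multiset.map_le_map h
  obtain ⟨u, hu⟩ := Multiset.le_iff_exists_add.1 h2
  have hsum : ((l₂ : Multiset α).map f).sum = ((l₁ : Multiset α).map f).sum + u.sum := by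
    rw [hu, Multiset.sum_add]
  have hu_nn : 0 ≤ u.sum := by
    apply Multiset.sum_nonneg
    intro x hx
    have : x ∈ ((l₂ : Multiset α).map f) := by
      rw [hu]; exact Multiset.mem_add.2 (Or.inr hx)
    obtain ⟨y, hy, rfl⟩ := Multiset.mem_map.1 this
    exact hnn y (by simpa using hy)
  have e1 : (l₁.map f).sum = ((l₁ : Multiset α).map f).sum := by simp
  have e2 : (l₂.map f).sum = ((l₂ : Multiset α).map f).sum := by simp
  rw [e1, e2, hsum]
  linarith

private lemma walkLen_nonneg {V : Type*} {G : SimpleGraph V} {ℓ : Sym2 V → ℝ}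
    (hnn : ∀ e ∈ G.edgeSet, 0 ≤ ℓ e) {u w : V} (q : G.Walk u w) :
    0 ≤ walkLen G ℓ q := by
  apply List.sum_nonneg
  intro x hx
  obtain ⟨e, he, rfl⟩ := List.mem_map.1 hx
  exact hnn e (q.edges_subset_edgeSet he)

private lemma walkLen_le {V : Type*} {G : SimpleGraph V} {ℓ : Sym2 V → ℝ}
    (hnn : ∀ e ∈ G.edgeSet, 0 ≤ ℓ e) {u w : V} {p q : G.Walk u w}
    (hd : p.edges.Nodup) (hsub : p.edges ⊆ q.edges) :
    walkLen G ℓ p ≤ walkLen G ℓ q :=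
  sum_map_le_of_subset ℓ hd hsub (fun e he => hnn e (q.edges_subset_edgeSet he))

private lemma gdist_eq_walkLen {V : Type*} {G : SimpleGraph V} (hac : G.IsAcyclic)
    {ℓ : Sym2 V → ℝ} (hnn : ∀ e ∈ G.edgeSet, 0 ≤ ℓ e) {u w : V}
    (p : G.Walk u w) (hp : p.IsPath) :
    gdist G ℓ u w = walkLen G ℓ p := by
  unfold gdist
  apply le_antisymm
  · have hmem : walkLen G ℓ p ∈ {x : ℝ | ∃ q : G.Walk u w, walkLen G ℓ q = x} := by
      rw [Set.mem_setOf_eq]; exact ⟨p, rfl⟩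
    refine csInf_le ⟨0, ?_⟩ hmem
    rintro x ⟨q, rfl⟩
    exact walkLen_nonneg hnn q
  · refine le_csInf ⟨walkLen G ℓ p, p, rfl⟩ ?_
    rintro x ⟨q, rfl⟩
    have hb : q.bypass = p :=
      congrArg Subtype.val (hac.path_unique ⟨q.bypass, q.bypass_isPath⟩ ⟨p, hp⟩)
    calc walkLen G ℓ p = walkLen G ℓ q.bypass := by rw [hb]
    _ ≤ walkLen G ℓ q :=
        walkLen_le hnn q.bypass_isPath.isTrail.edges_nodup q.edges_bypass_subset

private lemma gdist_comm {V : Type*} (G : SimpleGraph V) (ℓ : Sym2 V → ℝ) (u w : V) :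
    gdist G ℓ u w = gdist G ℓ w u := by
  unfold gdist
  congr 1
  ext x
  constructor
  · rintro ⟨q, rfl⟩
    exact ⟨q.reverse, by simp [walkLen, SimpleGraph.Walk.edges_reverse, List.map_reverse, List.sum_reverse]⟩
  · rintro ⟨q, rfl⟩
    exact ⟨q.reverse, by simp [walkLen, SimpleGraph.Walk.edges_reverse, List.map_reverse, List.sum_reverse]⟩

private lemma gdist_self {V : Type*} {G : SimpleGraph V} (hac : G.IsAcyclic)
    {ℓ : Sym2 V → ℝ} (hnn : ∀ e ∈ G.edgeSet, 0 ≤ ℓ e) (u : V) :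
    gdist G ℓ u u = 0 := by
  rw [gdist_eq_walkLen hac hnn SimpleGraph.Walk.nil SimpleGraph.Walk.IsPath.nil]
  simp [walkLen]

private lemma exists_path_in {V : Type*} {G : SimpleGraph V} {s : Set V}
    (hconn : (G.induce s).Connected) {u w : V} (hu : u ∈ s) (hw : w ∈ s) :
    ∃ p : G.Walk u w, p.IsPath ∧ ∀ x ∈ p.support, x ∈ s := by
  obtain ⟨q⟩ := hconn.preconnected ⟨u, hu⟩ ⟨w, hw⟩
  let f : G.induce s →g G := ⟨Subtype.val, fun {a b} h => h⟩
  refine ⟨(q.map f).bypass, (q.map f).bypass_isPath, fun x hx => ?_⟩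
  have hx' : x ∈ (q.map f).support := (q.map f).support_bypass_subset hx
  rw [SimpleGraph.Walk.support_map] at hx'
  obtain ⟨y, _, rfl⟩ := List.mem_map.1 hx'
  exact y.2

private lemma append_isPath {V : Type*} {G : SimpleGraph V} {u v w : V}
    {p₁ : G.Walk u v} {p₂ : G.Walk v w} (h₁ : p₁.IsPath) (h₂ : p₂.IsPath)
    (hs : ∀ x, x ∈ p₁.support → x ∈ p₂.support → x = v) :
    (p₁.append p₂).IsPath := by
  rw [SimpleGraph.Walk.isPath_def, SimpleGraph.Walk.support_append, List.nodup_append]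
  refine ⟨h₁.support_nodup, h₂.support_nodup.tail, ?_⟩
  intro x hx₁ y hx₂ hxy
  subst hxy
  have hx₂' : x ∈ p₂.support := by
    rw [p₂.support_eq_cons]; exact List.mem_cons_of_mem _ hx₂
  have hxv : x = v := hs x hx₁ hx₂'
  subst hxv
  have : x ∉ p₂.support.tail := by
    have := h₂.support_nodup
    rw [p₂.support_eq_cons] at this
    exact (List.nodup_cons.1 this).1
  exact this hx₂

private lemma walkLen_append {V : Type*} {G : SimpleGraph V} (ℓ : Sym2 V → ℝ) {u v w : V}
    (p₁ : G.Walk u v) (p₂ : G.Walk v w) :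
    walkLen G ℓ (p₁.append p₂) = walkLen G ℓ p₁ + walkLen G ℓ p₂ := by
  simp [walkLen, SimpleGraph.Walk.edges_append]

theorem test : True := trivial

theorem tree_load_partition {V : Type*} [Fintype V] (G : SimpleGraph V) (hT : G.IsTree)
    (ℓ : Sym2 V → ℝ) (hℓ : ∀ e ∈ G.edgeSet, 0 < ℓ e)
    (α β : ℝ) (hα : 1 ≤ α) (hβ : 0 ≤ β)
    (V₁ V₂ : Set V) (v : V) (hunion : V₁ ∪ V₂ = Set.univ) (hinter : V₁ ∩ V₂ = {v})
    (hconn₁ : (G.induce V₁).Connected) (hconn₂ : (G.induce V₂).Connected)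
    (C : Set (Sym2 V)) (hC : C ⊆ G.edgeSet) :
    (∀ u w : V, gdist G ℓ u w / α - gdist G (zeroOn ℓ C) u w ≤ β) ↔
    ((∀ u ∈ V₁, ∀ w ∈ V₁,
        gdist G ℓ u w / α - gdist G (zeroOn ℓ (C ∩ {e | ∀ x ∈ e, x ∈ V₁})) u w ≤ β) ∧
     (∀ u ∈ V₂, ∀ w ∈ V₂,
        gdist G ℓ u w / α - gdist G (zeroOn ℓ (C ∩ {e | ∀ x ∈ e, x ∈ V₂})) u w ≤ β) ∧
     sSup {x : ℝ | ∃ u ∈ V₁, x = gdist G ℓ u v / α - gdist G (zeroOn ℓ C) u v} +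
       sSup {x : ℝ | ∃ u ∈ V₂, x = gdist G ℓ u v / α - gdist G (zeroOn ℓ C) u v} ≤ β) := by
  have hac := hT.IsAcyclic
  have hnnℓ : ∀ e ∈ G.edgeSet, 0 ≤ ℓ e := fun e he => (hℓ e he).le
  have hnnz : ∀ (D : Set (Sym2 V)), ∀ e ∈ G.edgeSet, 0 ≤ zeroOn ℓ D e := by
    intro D e he
    unfold zeroOn
    split
    · exact le_refl 0
    · exact (hℓ e he).le
  have hv₁ : v ∈ V₁ := (hinter.symm.subset (Set.mem_singleton v)).1
  have hv₂ : v ∈ V₂ := (hinter.symm.subset (Set.mem_singleton v)).2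
  have hmem : ∀ u : V, u ∈ V₁ ∨ u ∈ V₂ := fun u => by
    have : u ∈ V₁ ∪ V₂ := by rw [hunion]; trivial
    exact this
  have hrestrict : ∀ (s : Set V), (G.induce s).Connected → ∀ u ∈ s, ∀ w ∈ s,
      gdist G (zeroOn ℓ C) u w = gdist G (zeroOn ℓ (C ∩ {e | ∀ x ∈ e, x ∈ s})) u w := by
    intro s hconn u hu w hw
    obtain ⟨p, hp, hsupp⟩ := exists_path_in hconn hu hw
    rw [gdist_eq_walkLen hac (hnnz C) p hp, gdist_eq_walkLen hac (hnnz _) p hp]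
    unfold walkLen
    congr 1
    apply List.map_congr_left
    intro e he
    revert he
    induction e using Sym2.ind with
    | _ a b =>
      intro he
      have ha : a ∈ s := hsupp a (p.fst_mem_support_of_mem_edges he)
      have hb : b ∈ s := hsupp b (p.snd_mem_support_of_mem_edges he)
      have hes : ∀ x ∈ (s(a, b) : Sym2 V), x ∈ s := by
        intro x hx
        rcases Sym2.mem_iff.1 hx with rfl | rfl
        · exact ha
        · exact hb
      unfold zeroOn
      by_cases hc : s(a, b) ∈ C
      · have : s(a, b) ∈ C ∩ {e | ∀ x ∈ e, x ∈ s} := ⟨hc, hes⟩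
        simp [hc, this]
      · have : s(a, b) ∉ C ∩ {e | ∀ x ∈ e, x ∈ s} := fun h => hc h.1
        simp [hc, this]
  have hadd : ∀ (ℓ' : Sym2 V → ℝ), (∀ e ∈ G.edgeSet, 0 ≤ ℓ' e) →
      ∀ u ∈ V₁, ∀ w ∈ V₂, gdist G ℓ' u w = gdist G ℓ' u v + gdist G ℓ' v w := by
    intro ℓ' hnn u hu w hw
    obtain ⟨p₁, hp₁, hs₁⟩ := exists_path_in hconn₁ hu hv₁
    obtain ⟨p₂, hp₂, hs₂⟩ := exists_path_in hconn₂ hv₂ hw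
    have happ : (p₁.append p₂).IsPath := by
      apply append_isPath hp₁ hp₂
      intro x hx₁ hx₂
      have hx : x ∈ V₁ ∩ V₂ := ⟨hs₁ x hx₁, hs₂ x hx₂⟩
      rw [hinter, Set.mem_singleton_iff] at hx
      exact hx
    rw [gdist_eq_walkLen hac hnn _ happ, gdist_eq_walkLen hac hnn p₁ hp₁,
        gdist_eq_walkLen hac hnn p₂ hp₂, walkLen_append]
  have hloadadd : ∀ u ∈ V₁, ∀ w ∈ V₂,
      gdist G ℓ u w / α - gdist G (zeroOn ℓ C) u w
        = (gdist G ℓ u v / α - gdist G (zeroOn ℓ C) u v)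
          + (gdist G ℓ v w / α - gdist G (zeroOn ℓ C) v w) := by
    intro u hu w hw
    rw [hadd ℓ hnnℓ u hu w hw, hadd _ (hnnz C) u hu w hw, add_div]
    ring
  have hloadvv : gdist G ℓ v v / α - gdist G (zeroOn ℓ C) v v = 0 := by
    rw [gdist_self hac hnnℓ, gdist_self hac (hnnz C)]
    simp
  have hA_ne : {x : ℝ | ∃ u ∈ V₁, x = gdist G ℓ u v / α - gdist G (zeroOn ℓ C) u v}.Nonempty :=
    ⟨0, v, hv₁, hloadvv.symm⟩
  have hB_ne : {x : ℝ | ∃ u ∈ V₂, x = gdist G ℓ u v / α - gdist G (zeroOn ℓ C) u v}.Nonempty :=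
    ⟨0, v, hv₂, hloadvv.symm⟩
  constructor
  · intro h
    refine ⟨?_, ?_, ?_⟩
    · intro u hu w hw
      rw [← hrestrict V₁ hconn₁ u hu w hw]
      exact h u w
    · intro u hu w hw
      rw [← hrestrict V₂ hconn₂ u hu w hw]
      exact h u w
    · have key : ∀ a ∈ {x : ℝ | ∃ u ∈ V₁, x = gdist G ℓ u v / α - gdist G (zeroOn ℓ C) u v},
          ∀ b ∈ {x : ℝ | ∃ u ∈ V₂, x = gdist G ℓ u v / α - gdist G (zeroOn ℓ C) u v},
          a + b ≤ β := by
        rintro a ⟨u, hu, rfl⟩ b ⟨u', hu', rfl⟩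
        have h' := h u u'
        rw [hloadadd u hu u' hu'] at h'
        have hcomm : gdist G ℓ u' v / α - gdist G (zeroOn ℓ C) u' v
            = gdist G ℓ v u' / α - gdist G (zeroOn ℓ C) v u' := by
          rw [gdist_comm G ℓ u' v, gdist_comm G (zeroOn ℓ C) u' v]
        rw [hcomm]
        exact h'
      have h1 : sSup {x : ℝ | ∃ u ∈ V₁, x = gdist G ℓ u v / α - gdist G (zeroOn ℓ C) u v}
          ≤ β - sSup {x : ℝ | ∃ u ∈ V₂, x = gdist G ℓ u v / α - gdist G (zeroOn ℓ C) u v} := by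
        apply csSup_le hA_ne
        intro a ha
        have h2 : sSup {x : ℝ | ∃ u ∈ V₂, x = gdist G ℓ u v / α - gdist G (zeroOn ℓ C) u v}
            ≤ β - a := by
          apply csSup_le hB_ne
          intro b hb
          linarith [key a ha b hb]
        linarith
      linarith
  · rintro ⟨h₁, h₂, h₃⟩
    have hbddA : BddAbove {x : ℝ | ∃ u ∈ V₁, x = gdist G ℓ u v / α - gdist G (zeroOn ℓ C) u v} := by
      refine ⟨β, ?_⟩
      rintro a ⟨u, hu, rfl⟩
      rw [hrestrict V₁ hconn₁ u hu v hv₁]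
      exact h₁ u hu v hv₁
    have hbddB : BddAbove {x : ℝ | ∃ u ∈ V₂, x = gdist G ℓ u v / α - gdist G (zeroOn ℓ C) u v} := by
      refine ⟨β, ?_⟩
      rintro a ⟨u, hu, rfl⟩
      rw [hrestrict V₂ hconn₂ u hu v hv₂]
      exact h₂ u hu v hv₂
    have hAle : ∀ u ∈ V₁, gdist G ℓ u v / α - gdist G (zeroOn ℓ C) u v
        ≤ sSup {x : ℝ | ∃ u ∈ V₁, x = gdist G ℓ u v / α - gdist G (zeroOn ℓ C) u v} :=
      fun u hu => le_csSup hbddA ⟨u, hu, rfl⟩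
    have hBle : ∀ u ∈ V₂, gdist G ℓ u v / α - gdist G (zeroOn ℓ C) u v
        ≤ sSup {x : ℝ | ∃ u ∈ V₂, x = gdist G ℓ u v / α - gdist G (zeroOn ℓ C) u v} :=
      fun u hu => le_csSup hbddB ⟨u, hu, rfl⟩
    intro u w
    rcases hmem u with hu | hu <;> rcases hmem w with hw | hw
    · rw [hrestrict V₁ hconn₁ u hu w hw]
      exact h₁ u hu w hw
    · rw [hloadadd u hu w hw]
      have ha := hAle u hu
      have hb : gdist G ℓ v w / α - gdist G (zeroOn ℓ C) v w
          ≤ sSup {x : ℝ | ∃ u ∈ V₂, x = gdist G ℓ u v / α - gdist G (zeroOn ℓ C) u v} := by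
        rw [gdist_comm G ℓ v w, gdist_comm G (zeroOn ℓ C) v w]
        exact hBle w hw
      linarith
    · rw [gdist_comm G ℓ u w, gdist_comm G (zeroOn ℓ C) u w, hloadadd w hw u hu]
      have ha := hAle w hw
      have hb : gdist G ℓ v u / α - gdist G (zeroOn ℓ C) v u
          ≤ sSup {x : ℝ | ∃ u ∈ V₂, x = gdist G ℓ u v / α - gdist G (zeroOn ℓ C) u v} := by
        rw [gdist_comm G ℓ v u, gdist_comm G (zeroOn ℓ C) v u]
        exact hBle u hu
      linarith
    · rw [hrestrict V₂ hconn₂ u hu w hw]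
      exact h₂ u hu w hw
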